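/- Let u, k, ω be real numbers, v ≥ 0, let Z have the Gaussian law on ℝ with mean 0 and variance v, and let φ be independent of Z and uniformly distributed on [0, 2π). Then for all real x, t, s, E[(−u k sin(kx + kZ − ωt + φ)) · (u cos(kx − ωs + φ))] = ½ u² k sin(ω(t − s)) exp(−k²v/2). -/

import Mathlib

open MeasureTheory ProbabilityTheory Real
open scoped NNReal
open scoped ENNReal

lemma sin_cos_phase_integral (a b : ℝ) :
    ∫ φ in (0:ℝ)..(2*π), Real.sin (a+φ) * Real.cos (b+φ) = π * Real.sin (a-b) := by
  have key : ∀ φ : ℝ, HasDerivAt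
      (fun φ : ℝ => -(Real.cos (a+b+2*φ)/4) + φ * (Real.sin (a-b)/2))
      (Real.sin (a+φ) * Real.cos (b+φ)) φ := by
    intro φ
    have h1 : HasDerivAt (fun x : ℝ => a + b + 2*x) 2 φ := by
      simpa using ((hasDerivAt_id φ).const_mul (2:ℝ)).const_add (a+b)
    have h4 : HasDerivAt (fun φ : ℝ => -(Real.cos (a+b+2*φ)/4) + φ * (Real.sin (a-b)/2))
        (-(-Real.sin (a+b+2*φ)*2/4) + 1*(Real.sin (a-b)/2)) φ :=
      ((h1.cos.div_const 4).neg).add ((hasDerivAt_id φ).mul_const _)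
    have hd : -(-Real.sin (a+b+2*φ)*2/4) + 1*(Real.sin (a-b)/2)
        = Real.sin (a+φ) * Real.cos (b+φ) := by
      rw [show a+b+2*φ = (a+φ)+(b+φ) from by ring,
        show a-b = (a+φ)-(b+φ) from by ring, Real.sin_add, Real.sin_sub]
      ring
    exact hd ▸ h4
  rw [intervalIntegral.integral_eq_sub_of_hasDerivAt (fun φ _ => key φ)
    (by apply Continuous.intervalIntegrable; fun_prop)]
  have e3 : a + b + 2*(2*π) = (a+b+2*π) + 2*π := by ring
  rw [e3, Real.cos_add_two_pi, Real.cos_add_two_pi]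
  ring

lemma gauss_sin (v : ℝ≥0) (k c : ℝ) :
    ∫ z, Real.sin (k*z + c) ∂(gaussianReal 0 v)
      = Real.sin c * Real.exp (-(k^2*(v:ℝ))/2) := by
  by_cases hv : v = 0
  · subst hv
    simp [integral_dirac]
  · set vr : ℝ := (v : ℝ) with hvr
    have hvr0 : 0 < vr := NNReal.coe_pos.mpr (pos_iff_ne_zero.mpr hv)
    set b : ℂ := -(1/(2*vr) : ℂ) with hb
    have hbre : b.re < 0 := by
      simp only [hb, Complex.neg_re, Complex.ofReal_re]
      norm_num
      positivity
    -- reduce to density integral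
    rw [gaussianReal_of_var_ne_zero _ hv]
    have hpdf : gaussianPDF 0 v = fun x => ((Real.toNNReal (gaussianPDFReal 0 v x)) : ℝ≥0∞) := rfl
    rw [hpdf, integral_withDensity_eq_integral_smul
      ((measurable_gaussianPDFReal 0 v).real_toNNReal) _]
    have hsm : ∀ z : ℝ, (Real.toNNReal (gaussianPDFReal 0 v z)) • Real.sin (k*z+c)
        = gaussianPDFReal 0 v z * Real.sin (k*z+c) := by
      intro z
      rw [NNReal.smul_def, Real.coe_toNNReal _ (gaussianPDFReal_nonneg 0 v z), smul_eq_mul]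
    simp_rw [hsm]
    -- express as imaginary part of a complex integral
    have hpt : ∀ z : ℝ, gaussianPDFReal 0 v z * Real.sin (k*z+c)
        = (((Real.sqrt (2*π*vr))⁻¹ : ℂ) * Complex.exp (b*z^2 + (k*Complex.I)*z + c*Complex.I)).im := by
      intro z
      have e1 : b*(z:ℂ)^2 + (k*Complex.I)*z + c*Complex.I
          = ((-(z-0)^2/(2*vr) : ℝ) : ℂ) + ((k*z+c : ℝ) : ℂ) * Complex.I := by
        push_cast
        rw [hb]
        ring
      rw [e1, Complex.exp_add, ← Complex.ofReal_exp, ← Complex.ofReal_inv,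
        ← mul_assoc, ← Complex.ofReal_mul]
      simp only [Complex.mul_im, Complex.ofReal_re, Complex.ofReal_im,
        Complex.exp_ofReal_mul_I_im, zero_mul, add_zero]
      simp only [gaussianPDFReal_def, hvr]
    simp_rw [hpt]
    have hint : Integrable (fun z : ℝ =>
        ((Real.sqrt (2*π*vr))⁻¹ : ℂ) * Complex.exp (b*z^2 + (k*Complex.I)*z + c*Complex.I)) :=
      (integrable_cexp_quadratic' hbre _ _).const_mul _
    simp_rw [← RCLike.im_eq_complex_im]
    rw [integral_im hint]
    simp only [RCLike.im_eq_complex_im]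
    rw [MeasureTheory.integral_const_mul, integral_cexp_quadratic hbre]
    -- simplify the closed form
    have hnb : -b = ((2*vr)⁻¹ : ℝ) := by rw [hb]; push_cast; ring
    have hpi : (π : ℂ) / -b = ((2*π*vr : ℝ) : ℂ) := by
      rw [hnb]
      push_cast
      field_simp
    have hpow : ((π : ℂ) / -b) ^ (1/2 : ℂ) = ((Real.sqrt (2*π*vr) : ℝ) : ℂ) := by
      rw [hpi]
      have h0 : (0:ℝ) ≤ 2*π*vr := by positivity
      rw [show (1/2 : ℂ) = ((1/2 : ℝ) : ℂ) by norm_num,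
        ← Complex.ofReal_cpow h0, ← Real.sqrt_eq_rpow]
    have hexp : (c*Complex.I - (k*Complex.I)^2/(4*b))
        = ((-(k^2*vr)/2 : ℝ) : ℂ) + ((c:ℝ):ℂ) * Complex.I := by
      rw [hb]
      have h2 : (2*(vr:ℂ)) ≠ 0 := by
        simp [Complex.ofReal_ne_zero]
        exact hvr0.ne'
      field_simp
      ring_nf
      rw [Complex.I_sq]
      push_cast
      ring
    rw [hpow, hexp, Complex.exp_add, ← Complex.ofReal_exp]
    have hs : ((Real.sqrt (2*π*vr) : ℝ) : ℂ) ≠ 0 := by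
      simp only [ne_eq, Complex.ofReal_eq_zero]
      positivity
    rw [← mul_assoc, inv_mul_cancel₀ hs, one_mul]
    simp only [Complex.mul_im, Complex.ofReal_re, Complex.ofReal_im,
      Complex.exp_ofReal_mul_I_im, zero_mul, add_zero]
    ring

/-- For the wave `f(x,t) = u cos(kx − ωt + φ)` with `f'` its derivative in the first
argument, a centered Gaussian displacement `Z` of variance `v`, and an independent
phase `φ` uniform on `[0, 2π)`:
`E[f'(x + Z, t) · f(x, s)] = ½ u² k sin(ω(t − s)) exp(−k²v/2)`. -/
theorem expectation_fprime_f (u k ω : ℝ) (v : ℝ≥0) (x t s : ℝ) :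
    ∫ p : ℝ × ℝ,
        (-(u * k) * Real.sin (k * x + k * p.1 - ω * t + p.2)) *
          (u * Real.cos (k * x - ω * s + p.2))
        ∂((gaussianReal 0 v).prod
            ((ENNReal.ofReal (2 * π))⁻¹ • volume.restrict (Set.Ico 0 (2 * π))))
      = (1 / 2) * u ^ 2 * k * Real.sin (ω * (t - s)) * Real.exp (-(k ^ 2 * (v : ℝ)) / 2) := by
  have hπ : (0:ℝ) < 2 * π := by positivity
  set ν : Measure ℝ := (ENNReal.ofReal (2 * π))⁻¹ • volume.restrict (Set.Ico 0 (2 * π)) with hν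
  haveI : IsFiniteMeasure ν := by
    constructor
    rw [hν, Measure.smul_apply, Measure.restrict_apply_univ, Real.volume_Ico, smul_eq_mul]
    exact ENNReal.mul_lt_top (ENNReal.inv_lt_top.mpr (by simp [hπ, Real.pi_pos])) ENNReal.ofReal_lt_top
  have hcont : Continuous (fun p : ℝ × ℝ =>
      (-(u * k) * Real.sin (k * x + k * p.1 - ω * t + p.2)) *
        (u * Real.cos (k * x - ω * s + p.2))) := by fun_prop
  have hInt : Integrable (fun p : ℝ × ℝ =>
      (-(u * k) * Real.sin (k * x + k * p.1 - ω * t + p.2)) *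
        (u * Real.cos (k * x - ω * s + p.2))) ((gaussianReal 0 v).prod ν) := by
    refine Integrable.mono' (integrable_const (|u * k| * |u|)) hcont.aestronglyMeasurable
      (ae_of_all _ fun p => ?_)
    rw [Real.norm_eq_abs, abs_mul, abs_mul, abs_mul, abs_neg]
    have h1 := Real.abs_sin_le_one (k * x + k * p.1 - ω * t + p.2)
    have h2 := Real.abs_cos_le_one (k * x - ω * s + p.2)
    calc |u * k| * |Real.sin (k * x + k * p.1 - ω * t + p.2)| *
          (|u| * |Real.cos (k * x - ω * s + p.2)|)
        ≤ |u * k| * 1 * (|u| * 1) := by gcongr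
      _ = |u * k| * |u| := by ring
  rw [MeasureTheory.integral_prod _ hInt]
  have hinner : ∀ z : ℝ,
      (∫ φ, (-(u * k) * Real.sin (k * x + k * z - ω * t + φ)) *
        (u * Real.cos (k * x - ω * s + φ)) ∂ν)
      = -(u^2 * k) / 2 * Real.sin (k * z + (ω * s - ω * t)) := by
    intro z
    rw [hν, MeasureTheory.integral_smul_measure, ENNReal.toReal_inv,
      ENNReal.toReal_ofReal hπ.le]
    rw [setIntegral_congr_set MeasureTheory.Ico_ae_eq_Ioc,
      ← intervalIntegral.integral_of_le hπ.le]
    have hfun : ∀ φ : ℝ, (-(u * k) * Real.sin (k * x + k * z - ω * t + φ)) *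
        (u * Real.cos (k * x - ω * s + φ))
        = (-(u^2 * k)) * (Real.sin ((k * x + k * z - ω * t) + φ) *
            Real.cos ((k * x - ω * s) + φ)) := by
      intro φ; ring_nf
    simp_rw [hfun]
    rw [intervalIntegral.integral_const_mul, sin_cos_phase_integral]
    rw [show k * x + k * z - ω * t - (k * x - ω * s) = k * z + (ω * s - ω * t) by ring]
    rw [smul_eq_mul]
    field_simp
  simp_rw [hinner]
  rw [MeasureTheory.integral_const_mul, gauss_sin]
  rw [show ω * s - ω * t = -(ω * (t - s)) by ring, Real.sin_neg]
  ring
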